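/- The Rogers formula for the bivariate Rogers–Szegő polynomials: let q, x, y, t, s ∈ ℂ with |q| < 1, |t| < 1, |s| < 1, |xt| < 1, |xs| < 1, and suppose y·s ≠ q^{-j} for every integer j ≥ 0. Then ∑_{n=0}^∞ ∑_{m=0}^∞ h_{n+m}(x,y|q) t^n s^m / ((q;q)_n (q;q)_m) = [(ys;q)_∞ / ((s;q)_∞ (xs;q)_∞ (xt;q)_∞)] · ∑_{k=0}^∞ (y;q)_k (xs;q)_k t^k / ((q;q)_k (ys;q)_k), where all series converge absolutely. -/

import Mathlib

/-- The q-shifted factorial `(a;q)_n = ∏_{k=0}^{n-1} (1 - a q^k)`. -/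
noncomputable def qPoch (a q : ℂ) (n : ℕ) : ℂ :=
  ∏ k ∈ Finset.range n, (1 - a * q ^ k)

/-- The infinite q-shifted factorial `(a;q)_∞ = ∏_{k=0}^{∞} (1 - a q^k)`. -/
noncomputable def qPochInf (a q : ℂ) : ℂ :=
  ∏' k : ℕ, (1 - a * q ^ k)

/-- The Gaussian binomial coefficient `[n,k]_q`. -/
noncomputable def qBinom (q : ℂ) (n k : ℕ) : ℂ :=
  qPoch q q n / (qPoch q q k * qPoch q q (n - k))

/-- The Cauchy polynomial `P_n(x,y) = ∏_{k=0}^{n-1} (x - q^k y)`. -/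
noncomputable def cauchyP (q x y : ℂ) (n : ℕ) : ℂ :=
  ∏ k ∈ Finset.range n, (x - q ^ k * y)

/-- The bivariate Rogers–Szegő polynomial `h_n(x,y|q)`. -/
noncomputable def hRS2 (q x y : ℂ) (n : ℕ) : ℂ :=
  ∑ k ∈ Finset.range (n + 1), qBinom q n k * cauchyP q x y k

/-- The Rogers–Szegő polynomial `h_n(x|q)`. -/
noncomputable def hRS (q x : ℂ) (n : ℕ) : ℂ :=
  ∑ k ∈ Finset.range (n + 1), qBinom q n k * x ^ k

/-- The continuous big q-Hermite polynomial `H_n(cos θ; a | q)`. -/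
noncomputable def bigH (q a θ : ℂ) (n : ℕ) : ℂ :=
  ∑ k ∈ Finset.range (n + 1),
    qBinom q n k * qPoch (a * Complex.exp (Complex.I * θ)) q k *
      Complex.exp (Complex.I * ((n : ℂ) - 2 * (k : ℂ)) * θ)

open Finset Filter Complex Topology


set_option maxHeartbeats 1000000

namespace RogersAux

variable {q a x y u : ℂ}

lemma qPoch_zero (a q : ℂ) : qPoch a q 0 = 1 := by simp [qPoch]

lemma qPoch_succ (a q : ℂ) (n : ℕ) : qPoch a q (n+1) = qPoch a q n * (1 - a * q ^ n) :=
  Finset.prod_range_succ _ _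

lemma cauchyP_zero (q x y : ℂ) : cauchyP q x y 0 = 1 := by simp [cauchyP]

lemma cauchyP_succ (q x y : ℂ) (n : ℕ) :
    cauchyP q x y (n+1) = cauchyP q x y n * (x - q ^ n * y) := Finset.prod_range_succ _ _

lemma cauchyP_one_zero (q : ℂ) (n : ℕ) : cauchyP q 1 0 n = 1 := by simp [cauchyP]

lemma cauchyP_one (q y : ℂ) (n : ℕ) : cauchyP q 1 y n = qPoch y q n := by
  unfold cauchyP qPoch
  exact Finset.prod_congr rfl fun k _ => by ring

lemma cauchyP_add (q x y : ℂ) (j i : ℕ) :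
    cauchyP q x y (j + i) = cauchyP q x y j * cauchyP q x (q ^ j * y) i := by
  rw [cauchyP, Finset.prod_range_add]
  congr 1
  exact Finset.prod_congr rfl fun k _ => by rw [pow_add]; ring

lemma one_sub_ne_zero_of_norm (h : ‖a‖ < 1) : (1 : ℂ) - a ≠ 0 := by
  intro h0
  have : a = 1 := by linear_combination -h0
  rw [this] at h; simp at h

lemma norm_pow_le_one (hq : ‖q‖ < 1) (k : ℕ) : ‖q ^ k‖ ≤ 1 := by
  rw [norm_pow]; exact pow_le_one₀ (norm_nonneg q) hq.le

lemma norm_mul_pow_lt_one (hq : ‖q‖ < 1) (ha : ‖a‖ < 1) (k : ℕ) : ‖a * q ^ k‖ < 1 := by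
  rw [norm_mul]
  calc ‖a‖ * ‖q ^ k‖ ≤ ‖a‖ * 1 :=
        mul_le_mul_of_nonneg_left (norm_pow_le_one hq k) (norm_nonneg a)
    _ < 1 := by rwa [mul_one]

lemma qPoch_q_ne_zero (hq : ‖q‖ < 1) (n : ℕ) : qPoch q q n ≠ 0 :=
  Finset.prod_ne_zero_iff.2 fun k _ => one_sub_ne_zero_of_norm (norm_mul_pow_lt_one hq hq k)

lemma qPoch_ne_zero_of_norm (hq : ‖q‖ < 1) (ha : ‖a‖ < 1) (n : ℕ) : qPoch a q n ≠ 0 :=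
  Finset.prod_ne_zero_iff.2 fun k _ => one_sub_ne_zero_of_norm (norm_mul_pow_lt_one hq ha k)

lemma qPoch_ne_zero_of_ne_one (h : ∀ k : ℕ, a * q ^ k ≠ 1) (n : ℕ) : qPoch a q n ≠ 0 :=
  Finset.prod_ne_zero_iff.2 fun k _ => sub_ne_zero.mpr (Ne.symm (h k))

lemma tendsto_q_pow (hq : ‖q‖ < 1) : Tendsto (fun k : ℕ => q ^ k) atTop (𝓝 0) :=
  tendsto_pow_atTop_nhds_zero_of_norm_lt_one hq

lemma summable_log_qPoch (hq : ‖q‖ < 1) (a : ℂ) :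
    Summable fun k : ℕ => Complex.log (1 - a * q ^ k) := by
  have h0 : Tendsto (fun k : ℕ => ‖a * q ^ k‖) atTop (𝓝 0) := by
    have := ((tendsto_q_pow hq).const_mul a).norm
    simpa using this
  obtain ⟨K, hK⟩ := eventually_atTop.1 <| h0.eventually (eventually_le_nhds (by norm_num : (0:ℝ) < 1/2))
  rw [← summable_nat_add_iff K]
  have geo : Summable (fun k : ℕ => 3/2 * ‖a * q ^ K‖ * ‖q‖ ^ k) :=
    (summable_geometric_of_lt_one (norm_nonneg q) hq).mul_left _
  apply Summable.of_norm_bounded geo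
  intro k
  have h1 : ‖a * q ^ (k + K)‖ ≤ 1/2 := hK (k+K) (by omega)
  have e : a * q ^ (k + K) = (a * q ^ K) * q ^ k := by rw [pow_add]; ring
  calc ‖Complex.log (1 - a * q ^ (k+K))‖
      = ‖Complex.log (1 + -(a * q ^ (k+K)))‖ := by rw [sub_eq_add_neg]
    _ ≤ 3/2 * ‖-(a * q ^ (k+K))‖ :=
        Complex.norm_log_one_add_half_le_self (by rwa [norm_neg])
    _ = 3/2 * (‖a * q ^ K‖ * ‖q‖ ^ k) := by rw [norm_neg, e, norm_mul, norm_pow]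
    _ = 3/2 * ‖a * q ^ K‖ * ‖q‖ ^ k := by ring

lemma hasProd_zero_of_eq_zero {f : ℕ → ℂ} (h : ∃ k, f k = 0) : HasProd f 0 := by
  obtain ⟨k, hk⟩ := h
  have hev : ∀ᶠ F : Finset ℕ in atTop, ∏ i ∈ F, f i = 0 := by
    filter_upwards [eventually_ge_atTop ({k} : Finset ℕ)] with F hF
    exact Finset.prod_eq_zero (hF (Finset.mem_singleton_self k)) hk
  exact Tendsto.congr' (by filter_upwards [hev] with F hF; exact hF.symm) tendsto_const_nhds

lemma hasProd_qPochInf (hq : ‖q‖ < 1) (a : ℂ) :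
    HasProd (fun k : ℕ => 1 - a * q ^ k) (qPochInf a q) := by
  by_cases h0 : ∃ k, (1:ℂ) - a * q ^ k = 0
  · have h := hasProd_zero_of_eq_zero h0
    have : qPochInf a q = 0 := h.tprod_eq
    rw [this]; exact h
  · push_neg at h0
    exact (Complex.hasProd_of_hasSum_log (fun k => h0 k)
      (summable_log_qPoch hq a).hasSum).multipliable.hasProd

lemma tendsto_qPoch (hq : ‖q‖ < 1) (a : ℂ) :
    Tendsto (fun n => qPoch a q n) atTop (𝓝 (qPochInf a q)) :=
  (hasProd_qPochInf hq a).tendsto_prod_nat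

lemma qPoch_add (a q : ℂ) (k n : ℕ) :
    qPoch a q (k + n) = qPoch a q k * qPoch (a * q ^ k) q n := by
  rw [qPoch, Finset.prod_range_add]
  congr 1
  exact Finset.prod_congr rfl fun i _ => by rw [pow_add]; ring

lemma qPochInf_split (hq : ‖q‖ < 1) (a : ℂ) (k : ℕ) :
    qPochInf a q = qPoch a q k * qPochInf (a * q ^ k) q := by
  have h1 : Tendsto (fun n => qPoch a q (k + n)) atTop (𝓝 (qPochInf a q)) :=
    (tendsto_qPoch hq a).comp (tendsto_add_atTop_nat k |>.congr (fun n => by omega) |>.comp tendsto_id) |>.congr (fun n => rfl)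
  have h2 : Tendsto (fun n => qPoch a q k * qPoch (a * q ^ k) q n) atTop
      (𝓝 (qPoch a q k * qPochInf (a * q ^ k) q)) :=
    (tendsto_qPoch hq (a * q ^ k)).const_mul _
  exact tendsto_nhds_unique (h1.congr fun n => qPoch_add a q k n) h2

lemma qPochInf_ne_zero (hq : ‖q‖ < 1) (h : ∀ k : ℕ, a * q ^ k ≠ 1) : qPochInf a q ≠ 0 := by
  have hfn : ∀ k : ℕ, (1 : ℂ) - a * q ^ k ≠ 0 := fun k => sub_ne_zero.mpr (Ne.symm (h k))
  have h2 := Complex.cexp_tsum_eq_tprod (f := fun k => 1 - a * q ^ k)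
    (fun k => hfn k) (summable_log_qPoch hq a)
  rw [qPochInf, ← h2]
  exact Complex.exp_ne_zero _

lemma qPochInf_ne_zero_of_norm (hq : ‖q‖ < 1) (ha : ‖a‖ < 1) : qPochInf a q ≠ 0 :=
  qPochInf_ne_zero hq fun k h => by
    have := norm_mul_pow_lt_one hq ha k
    rw [h] at this; simp at this

lemma qPochInf_zero (q : ℂ) : qPochInf 0 q = 1 := by simp [qPochInf]


lemma summable_norm_of_ratio {f : ℕ → ℂ} {c : ℕ → ℝ} {L : ℝ} (hL : L < 1)
    (hc : Tendsto c atTop (𝓝 L)) (hf : ∀ k, ‖f (k + 1)‖ ≤ c k * ‖f k‖) :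
    Summable fun k => ‖f k‖ := by
  obtain ⟨r, hLr, hr⟩ := exists_between hL
  apply summable_of_ratio_norm_eventually_le hr
  filter_upwards [hc.eventually (eventually_le_nhds hLr)] with k hk
  rw [Real.norm_of_nonneg (norm_nonneg _), Real.norm_of_nonneg (norm_nonneg _)]
  exact (hf k).trans (mul_le_mul_of_nonneg_right hk (norm_nonneg _))

lemma summable_real_of_ratio {f : ℕ → ℝ} {c : ℕ → ℝ} {L : ℝ} (hL : L < 1)
    (hc : Tendsto c atTop (𝓝 L)) (hnn : ∀ k, 0 ≤ f k) (hf : ∀ k, f (k + 1) ≤ c k * f k) :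
    Summable f := by
  obtain ⟨r, hLr, hr⟩ := exists_between hL
  apply summable_of_ratio_norm_eventually_le hr
  filter_upwards [hc.eventually (eventually_le_nhds hLr)] with k hk
  rw [Real.norm_of_nonneg (hnn _), Real.norm_of_nonneg (hnn _)]
  exact (hf k).trans (mul_le_mul_of_nonneg_right hk (hnn _))

lemma tendsto_ratio_cauchy (hq : ‖q‖ < 1) (x y u : ℂ) :
    Tendsto (fun k : ℕ => ‖(x - q ^ k * y) * u / (1 - q * q ^ k)‖) atTop (𝓝 ‖x * u‖) := by
  have hnum : Tendsto (fun k : ℕ => (x - q ^ k * y) * u / (1 - q * q ^ k)) atTop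
      (𝓝 ((x - 0 * y) * u / (1 - q * 0))) := by
    apply Tendsto.div
    · exact (tendsto_const_nhds.sub ((tendsto_q_pow hq).mul_const y)).mul_const u
    · exact tendsto_const_nhds.sub ((tendsto_q_pow hq).const_mul q)
    · simp
  have := hnum.norm
  simpa using this

/-- The general summand of the `cS` series. -/
lemma term_succ (q x y u : ℂ) (k : ℕ) :
    cauchyP q x y (k+1) * u ^ (k+1) / qPoch q q (k+1)
      = (cauchyP q x y k * u ^ k / qPoch q q k) * ((x - q ^ k * y) * u / (1 - q * q ^ k)) := by
  rw [cauchyP_succ, qPoch_succ, pow_succ, div_mul_div_comm]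
  congr 1
  ring

lemma summable_norm_cauchy (hq : ‖q‖ < 1) (hxu : ‖x * u‖ < 1) :
    Summable fun k => ‖cauchyP q x y k * u ^ k / qPoch q q k‖ := by
  apply summable_norm_of_ratio hxu (tendsto_ratio_cauchy hq x y u)
  intro k
  rw [term_succ, norm_mul, mul_comm]

lemma summable_cauchy (hq : ‖q‖ < 1) (hxu : ‖x * u‖ < 1) :
    Summable fun k => cauchyP q x y k * u ^ k / qPoch q q k :=
  (summable_norm_cauchy hq hxu).of_norm

/-- Real domination sequence. -/
noncomputable def pb (q x y u : ℂ) (k : ℕ) : ℝ :=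
  (∏ l ∈ Finset.range k, (‖x‖ + ‖q‖ ^ l * ‖y‖)) * ‖u‖ ^ k / ‖qPoch q q k‖

lemma pb_nonneg (q x y u : ℂ) (k : ℕ) : 0 ≤ pb q x y u k := by
  apply div_nonneg (mul_nonneg (Finset.prod_nonneg fun l _ => ?_) (pow_nonneg (norm_nonneg u) _))
    (norm_nonneg _)
  positivity

lemma pb_succ (q x y u : ℂ) (k : ℕ) :
    pb q x y u (k+1) = pb q x y u k * ((‖x‖ + ‖q‖ ^ k * ‖y‖) * ‖u‖ / ‖1 - q * q ^ k‖) := by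
  unfold pb
  rw [Finset.prod_range_succ, qPoch_succ, norm_mul, pow_succ, div_mul_div_comm]
  congr 1
  ring

lemma summable_pb (hq : ‖q‖ < 1) (hxu : ‖x * u‖ < 1) : Summable (pb q x y u) := by
  have h0 : Tendsto (fun k : ℕ => ‖q‖ ^ k) atTop (𝓝 0) := by
    simpa [norm_pow] using (tendsto_q_pow hq).norm
  have hten : Tendsto (fun k : ℕ => (‖x‖ + ‖q‖ ^ k * ‖y‖) * ‖u‖ / ‖1 - q * q ^ k‖) atTop
      (𝓝 ((‖x‖ + 0 * ‖y‖) * ‖u‖ / ‖(1:ℂ) - q * 0‖)) := by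
    apply Tendsto.div
    · exact (tendsto_const_nhds.add (h0.mul_const ‖y‖)).mul_const ‖u‖
    · exact (tendsto_const_nhds.sub ((tendsto_q_pow hq).const_mul q)).norm
    · simp
  have hten' : Tendsto (fun k : ℕ => (‖x‖ + ‖q‖ ^ k * ‖y‖) * ‖u‖ / ‖1 - q * q ^ k‖) atTop
      (𝓝 ‖x * u‖) := by simpa [norm_mul] using hten
  apply summable_real_of_ratio hxu hten' (pb_nonneg q x y u)
  intro k
  rw [pb_succ, mul_comm]

lemma norm_cauchyP_le (hq : ‖q‖ < 1) {v : ℂ} (hv : ‖v‖ ≤ 1) (k : ℕ) :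
    ‖cauchyP q x (v * y) k‖ ≤ ∏ l ∈ Finset.range k, (‖x‖ + ‖q‖ ^ l * ‖y‖) := by
  rw [cauchyP, norm_prod]
  apply Finset.prod_le_prod (fun l _ => norm_nonneg _)
  intro l _
  calc ‖x - q ^ l * (v * y)‖ ≤ ‖x‖ + ‖q ^ l * (v * y)‖ := norm_sub_le _ _
    _ = ‖x‖ + ‖q‖ ^ l * (‖v‖ * ‖y‖) := by rw [norm_mul, norm_mul, norm_pow]
    _ ≤ ‖x‖ + ‖q‖ ^ l * (1 * ‖y‖) := by
        have : ‖v‖ * ‖y‖ ≤ 1 * ‖y‖ := mul_le_mul_of_nonneg_right hv (norm_nonneg y)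
        have h2 : (0:ℝ) ≤ ‖q‖ ^ l := pow_nonneg (norm_nonneg q) l
        nlinarith
    _ = ‖x‖ + ‖q‖ ^ l * ‖y‖ := by rw [one_mul]

lemma norm_term_le_pb (hq : ‖q‖ < 1) {v u' : ℂ} (hv : ‖v‖ ≤ 1) (hu' : ‖u'‖ ≤ ‖u‖) (k : ℕ) :
    ‖cauchyP q x (v * y) k * u' ^ k / qPoch q q k‖ ≤ pb q x y u k := by
  have hQ : 0 < ‖qPoch q q k‖ := norm_pos_iff.mpr (qPoch_q_ne_zero hq k)
  rw [norm_div, norm_mul, norm_pow, pb]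
  have h1 : ‖cauchyP q x (v * y) k‖ * ‖u'‖ ^ k
      ≤ (∏ l ∈ Finset.range k, (‖x‖ + ‖q‖ ^ l * ‖y‖)) * ‖u‖ ^ k := by
    apply mul_le_mul (norm_cauchyP_le hq hv k)
      (pow_le_pow_left₀ (norm_nonneg u') hu' k) (by positivity) (Finset.prod_nonneg fun l _ => by positivity)
  exact div_le_div_of_nonneg_right h1 hQ.le

/-- The basic `q`-series `∑ P_k(x,y) u^k / (q;q)_k`. -/
noncomputable def cS (q x y u : ℂ) : ℂ := ∑' k : ℕ, cauchyP q x y k * u ^ k / qPoch q q k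

lemma norm_xu_scale (hq : ‖q‖ < 1) (hxu : ‖x * u‖ < 1) (v : ℂ) (hv : ‖v‖ ≤ 1) :
    ‖x * (v * u)‖ < 1 := by
  have : ‖x * (v * u)‖ = ‖v‖ * ‖x * u‖ := by
    rw [norm_mul, norm_mul, norm_mul]; ring
  rw [this]
  calc ‖v‖ * ‖x * u‖ ≤ 1 * ‖x * u‖ := mul_le_mul_of_nonneg_right hv (norm_nonneg _)
    _ = ‖x * u‖ := one_mul _
    _ < 1 := hxu

lemma cS_funeq (hq : ‖q‖ < 1) (hxu : ‖x * u‖ < 1) :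
    (1 - x * u) * cS q x y u = (1 - y * u) * cS q x y (q * u) := by
  have hQ : ∀ n, qPoch q q n ≠ 0 := qPoch_q_ne_zero hq
  have h1q : ∀ n : ℕ, (1:ℂ) - q * q ^ n ≠ 0 :=
    fun n => one_sub_ne_zero_of_norm (norm_mul_pow_lt_one hq hq n)
  have hqu : ‖x * (q * u)‖ < 1 := norm_xu_scale hq hxu q hq.le
  set f : ℕ → ℂ := fun k => cauchyP q x y k * u ^ k / qPoch q q k with hf_def
  set g : ℕ → ℂ := fun k => cauchyP q x y k * (q * u) ^ k / qPoch q q k with hg_def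
  have hf : Summable f := summable_cauchy hq hxu
  have hg : Summable g := summable_cauchy hq hqu
  set T : ℕ → ℂ := fun k => cauchyP q x y (k+1) * u ^ (k+1) / qPoch q q k with hT_def
  have e2 : ∑' k, (f k - g k) = ∑' k, T k := by
    rw [(hf.sub hg).tsum_eq_zero_add]
    have h00 : f 0 - g 0 = 0 := by
      show cauchyP q x y 0 * u ^ 0 / qPoch q q 0 - cauchyP q x y 0 * (q*u) ^ 0 / qPoch q q 0 = 0
      simp [cauchyP, qPoch]
    rw [h00, zero_add]
    apply tsum_congr
    intro k
    show f (k+1) - g (k+1) = T k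
    simp only [hf_def, hg_def, hT_def]
    rw [qPoch_succ, mul_pow]
    field_simp [hQ k, h1q k]
    ring
  have e3 : ∑' k, (x * u * f k - y * u * g k) = ∑' k, T k := by
    apply tsum_congr
    intro k
    simp only [hf_def, hg_def, hT_def]
    rw [cauchyP_succ, mul_pow, pow_succ]
    field_simp
  have key : cS q x y u - cS q x y (q * u) = x * u * cS q x y u - y * u * cS q x y (q * u) := by
    have l1 : cS q x y u - cS q x y (q * u) = ∑' k, (f k - g k) := (hf.tsum_sub hg).symm
    have l2 : x * u * cS q x y u - y * u * cS q x y (q * u)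
        = ∑' k, (x * u * f k - y * u * g k) := by
      rw [cS, cS, ← tsum_mul_left, ← tsum_mul_left]
      exact ((hf.mul_left _).tsum_sub (hg.mul_left _)).symm
    rw [l1, l2, e2, e3]
  linear_combination key

lemma cS_iter (hq : ‖q‖ < 1) (hxu : ‖x * u‖ < 1) (n : ℕ) :
    qPoch (x*u) q n * cS q x y u = qPoch (y*u) q n * cS q x y (q ^ n * u) := by
  induction n with
  | zero => simp [qPoch_zero]
  | succ n ih =>
    have hxqu : ‖x * (q ^ n * u)‖ < 1 := norm_xu_scale hq hxu _ (norm_pow_le_one hq n)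
    have step := cS_funeq (u := q ^ n * u) (y := y) hq hxqu
    have e : q * (q ^ n * u) = q ^ (n+1) * u := by ring
    rw [e] at step
    rw [qPoch_succ, qPoch_succ]
    calc qPoch (x*u) q n * (1 - x*u*q^n) * cS q x y u
        = (1 - x*(q^n*u)) * (qPoch (x*u) q n * cS q x y u) := by ring
      _ = (1 - x*(q^n*u)) * (qPoch (y*u) q n * cS q x y (q^n*u)) := by rw [ih]
      _ = qPoch (y*u) q n * ((1 - x*(q^n*u)) * cS q x y (q^n*u)) := by ring
      _ = qPoch (y*u) q n * ((1 - y*(q^n*u)) * cS q x y (q^(n+1)*u)) := by rw [step]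
      _ = qPoch (y*u) q n * (1 - y*u*q^n) * cS q x y (q^(n+1)*u) := by ring

lemma cS_zero_u (q x y : ℂ) : cS q x y 0 = 1 := by
  rw [cS, tsum_eq_single 0]
  · simp [cauchyP_zero, qPoch_zero]
  · intro k hk
    have : (0:ℂ) ^ k = 0 := zero_pow hk
    simp [this]

lemma summable_pc (hq : ‖q‖ < 1) (hxu : ‖x * u‖ < 1) :
    Summable (fun k => (∏ l ∈ Finset.range (k+1), (‖x‖ + ‖q‖ ^ l * ‖y‖)) * ‖u‖ ^ k
      / ‖qPoch q q (k+1)‖) := by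
  have h0 : Tendsto (fun k : ℕ => ‖q‖ ^ k) atTop (𝓝 0) := by
    simpa [norm_pow] using (tendsto_q_pow hq).norm
  have hten : Tendsto (fun k : ℕ => (‖x‖ + ‖q‖ ^ (k+1) * ‖y‖) * ‖u‖ / ‖1 - q * q ^ (k+1)‖) atTop
      (𝓝 ((‖x‖ + 0 * ‖y‖) * ‖u‖ / ‖(1:ℂ) - q * 0‖)) := by
    apply Tendsto.div
    · exact (tendsto_const_nhds.add (((h0.comp (tendsto_add_atTop_nat 1)).mul_const ‖y‖))).mul_const ‖u‖
    · exact (tendsto_const_nhds.sub (((tendsto_q_pow hq).comp (tendsto_add_atTop_nat 1)).const_mul q)).norm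
    · simp
  have hten' : Tendsto (fun k : ℕ => (‖x‖ + ‖q‖ ^ (k+1) * ‖y‖) * ‖u‖ / ‖1 - q * q ^ (k+1)‖) atTop
      (𝓝 ‖x * u‖) := by simpa [norm_mul] using hten
  apply summable_real_of_ratio hxu hten'
  · intro k
    have hQpos : 0 < ‖qPoch q q (k+1)‖ := norm_pos_iff.mpr (qPoch_q_ne_zero hq _)
    positivity
  · intro k
    apply le_of_eq
    rw [mul_comm]
    rw [Finset.prod_range_succ, qPoch_succ q q (k+1), norm_mul, pow_succ, div_mul_div_comm]
    ring

lemma tendsto_cS_one (hq : ‖q‖ < 1) (hxu : ‖x * u‖ < 1) :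
    Tendsto (fun n : ℕ => cS q x y (q ^ n * u)) atTop (𝓝 1) := by
  set pc : ℕ → ℝ := fun k => (∏ l ∈ Finset.range (k+1), (‖x‖ + ‖q‖ ^ l * ‖y‖)) * ‖u‖ ^ k
      / ‖qPoch q q (k+1)‖ with hpc_def
  have hpc : Summable pc := summable_pc hq hxu
  have hpcnn : ∀ k, 0 ≤ pc k := by
    intro k
    have hQpos : 0 < ‖qPoch q q (k+1)‖ := norm_pos_iff.mpr (qPoch_q_ne_zero hq _)
    simp only [hpc_def]
    positivity
  set B : ℝ := ∑' k, pc k with hB_def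
  have hbound : ∀ v : ℂ, ‖v‖ ≤ ‖u‖ → ‖cS q x y v - 1‖ ≤ ‖v‖ * B := by
    intro v hv
    have hxv : ‖x * v‖ < 1 := by
      rw [norm_mul]
      calc ‖x‖ * ‖v‖ ≤ ‖x‖ * ‖u‖ := mul_le_mul_of_nonneg_left hv (norm_nonneg x)
        _ = ‖x * u‖ := (norm_mul x u).symm
        _ < 1 := hxu
    have hsv : Summable fun k => cauchyP q x y k * v ^ k / qPoch q q k :=
      summable_cauchy hq hxv
    have hstep : cS q x y v - 1 = ∑' k, cauchyP q x y (k+1) * v ^ (k+1) / qPoch q q (k+1) := by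
      rw [cS, hsv.tsum_eq_zero_add]
      simp [cauchyP_zero, qPoch_zero]
    rw [hstep]
    have hnorms : Summable fun k => ‖cauchyP q x y (k+1) * v ^ (k+1) / qPoch q q (k+1)‖ :=
      (summable_nat_add_iff 1).2 (summable_norm_cauchy hq hxv)
    refine (norm_tsum_le_tsum_norm hnorms).trans ?_
    have hterm : ∀ k : ℕ, ‖cauchyP q x y (k+1) * v ^ (k+1) / qPoch q q (k+1)‖
        ≤ ‖v‖ * pc k := by
      intro k
      have hQpos : 0 < ‖qPoch q q (k+1)‖ := norm_pos_iff.mpr (qPoch_q_ne_zero hq _)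
      have hPr : (0:ℝ) ≤ ∏ l ∈ Finset.range (k+1), (‖x‖ + ‖q‖ ^ l * ‖y‖) :=
        Finset.prod_nonneg fun l _ => by positivity
      have hc : ‖cauchyP q x y (k+1)‖ ≤ ∏ l ∈ Finset.range (k+1), (‖x‖ + ‖q‖ ^ l * ‖y‖) := by
        have := norm_cauchyP_le (x := x) (y := y) hq (v := 1) (by simp) (k+1)
        simpa using this
      have hvp : ‖v ^ (k+1)‖ ≤ ‖v‖ * ‖u‖ ^ k := by
        rw [norm_pow, pow_succ']
        exact mul_le_mul_of_nonneg_left (pow_le_pow_left₀ (norm_nonneg v) hv k) (norm_nonneg v)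
      have e : ‖v‖ * pc k = (∏ l ∈ Finset.range (k+1), (‖x‖ + ‖q‖ ^ l * ‖y‖)) * (‖v‖ * ‖u‖ ^ k)
          / ‖qPoch q q (k+1)‖ := by
        simp only [hpc_def]
        rw [← mul_div_assoc]
        congr 1
        ring
      rw [e, norm_div, norm_mul]
      apply div_le_div_of_nonneg_right ?_ hQpos.le
      exact mul_le_mul hc hvp (norm_nonneg _) hPr
    calc ∑' k, ‖cauchyP q x y (k+1) * v ^ (k+1) / qPoch q q (k+1)‖
        ≤ ∑' k, ‖v‖ * pc k := Summable.tsum_le_tsum hterm hnorms (hpc.mul_left _)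
      _ = ‖v‖ * B := tsum_mul_left
  rw [tendsto_iff_norm_sub_tendsto_zero]
  have hle : ∀ n : ℕ, ‖q ^ n * u‖ ≤ ‖u‖ := fun n => by
    rw [norm_mul]
    calc ‖q ^ n‖ * ‖u‖ ≤ 1 * ‖u‖ :=
          mul_le_mul_of_nonneg_right (norm_pow_le_one hq n) (norm_nonneg u)
      _ = ‖u‖ := one_mul _
  apply squeeze_zero (fun n => norm_nonneg _) (fun n => hbound _ (hle n))
  have h0 : Tendsto (fun n : ℕ => ‖q ^ n * u‖) atTop (𝓝 0) := by
    simpa using ((tendsto_q_pow hq).mul_const u).norm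
  simpa using h0.mul_const B

lemma cS_mul (hq : ‖q‖ < 1) (hxu : ‖x * u‖ < 1) :
    cS q x y u * qPochInf (x*u) q = qPochInf (y*u) q := by
  have h1 : Tendsto (fun n => qPoch (x*u) q n * cS q x y u) atTop
      (𝓝 (qPochInf (x*u) q * cS q x y u)) := (tendsto_qPoch hq _).mul_const _
  have h2 : Tendsto (fun n => qPoch (y*u) q n * cS q x y (q ^ n * u)) atTop
      (𝓝 (qPochInf (y*u) q * 1)) := (tendsto_qPoch hq _).mul (tendsto_cS_one hq hxu)
  have := tendsto_nhds_unique (h1.congr fun n => cS_iter hq hxu n) h2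
  rw [mul_one] at this
  rw [mul_comm]
  exact this

section Vandermonde

variable {q : ℂ}

lemma qBinom_zero (hq : ‖q‖ < 1) (n : ℕ) : qBinom q n 0 = 1 := by
  rw [qBinom, Nat.sub_zero, qPoch_zero, one_mul, div_self (qPoch_q_ne_zero hq n)]

lemma qBinom_self (hq : ‖q‖ < 1) (n : ℕ) : qBinom q n n = 1 := by
  rw [qBinom, Nat.sub_self, qPoch_zero, mul_one, div_self (qPoch_q_ne_zero hq n)]

lemma qBinom_pascal_aux (hq : ‖q‖ < 1) (j d : ℕ) :
    qBinom q (j + d + 2) (j + 1)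
      = qBinom q (j + d + 1) (j + 1) + q ^ (d + 1) * qBinom q (j + d + 1) j := by
  have hQ : ∀ n, qPoch q q n ≠ 0 := qPoch_q_ne_zero hq
  have h1q : ∀ n : ℕ, (1:ℂ) - q * q ^ n ≠ 0 :=
    fun n => one_sub_ne_zero_of_norm (norm_mul_pow_lt_one hq hq n)
  have e1 : j + d + 2 - (j + 1) = d + 1 := by omega
  have e2 : j + d + 1 - (j + 1) = d := by omega
  have e3 : j + d + 1 - j = d + 1 := by omega
  rw [qBinom, qBinom, qBinom, e1, e2, e3]
  rw [show j + d + 2 = (j + d + 1) + 1 from rfl, qPoch_succ q q (j+d+1),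
    qPoch_succ q q d, qPoch_succ q q j]
  have hd : qPoch q q d ≠ 0 := hQ d
  have hj : qPoch q q j ≠ 0 := hQ j
  have hjd : qPoch q q (j + d + 1) ≠ 0 := hQ (j + d + 1)
  have h1 : (1:ℂ) - q * q ^ d ≠ 0 := h1q d
  have h2 : (1:ℂ) - q * q ^ j ≠ 0 := h1q j
  field_simp
  ring

lemma qBinom_pascal (hq : ‖q‖ < 1) {j m : ℕ} (hjm : j < m) :
    qBinom q (m + 1) (j + 1) = qBinom q m (j + 1) + q ^ (m - j) * qBinom q m j := by
  obtain ⟨d, rfl⟩ : ∃ d, m = j + d + 1 := ⟨m - j - 1, by omega⟩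
  have e : j + d + 1 - j = d + 1 := by omega
  rw [e]
  exact qBinom_pascal_aux hq j d

lemma pascal_split (hq : ‖q‖ < 1) (N : ℕ) (f : ℕ → ℂ) :
    ∑ k ∈ Finset.range (N + 2), qBinom q (N + 1) k * f k
      = ∑ k ∈ Finset.range (N + 1), qBinom q N k * f k
        + ∑ k ∈ Finset.range (N + 1), q ^ (N - k) * qBinom q N k * f (k + 1) := by
  rw [Finset.sum_range_succ']
  rw [Finset.sum_range_succ (fun j => qBinom q (N+1) (j+1) * f (j+1)) N]
  have h1 : ∀ j ∈ Finset.range N, qBinom q (N+1) (j+1) * f (j+1)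
      = qBinom q N (j+1) * f (j+1) + q ^ (N - j) * qBinom q N j * f (j+1) := by
    intro j hj
    rw [qBinom_pascal hq (Finset.mem_range.1 hj)]
    ring
  rw [Finset.sum_congr rfl h1, Finset.sum_add_distrib]
  rw [Finset.sum_range_succ' (fun k => qBinom q N k * f k) N]
  rw [Finset.sum_range_succ (fun k => q ^ (N - k) * qBinom q N k * f (k + 1)) N]
  rw [qBinom_zero hq, qBinom_zero hq, qBinom_self hq, qBinom_self hq, Nat.sub_self]
  ring

lemma vandermonde (hq : ‖q‖ < 1) (n : ℕ) : ∀ (m : ℕ) (c : ℕ → ℂ),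
    ∑ j ∈ Finset.range (m + 1), ∑ i ∈ Finset.range (n + 1),
        qBinom q m j * qBinom q n i * q ^ (j * (n - i)) * c (i + j)
      = ∑ k ∈ Finset.range (n + m + 1), qBinom q (n + m) k * c k := by
  intro m
  induction m with
  | zero =>
    intro c
    rw [Finset.sum_range_one]
    rw [Nat.add_zero]
    apply Finset.sum_congr rfl
    intro i _
    rw [qBinom_zero hq, Nat.zero_mul, pow_zero, Nat.add_zero]
    ring
  | succ m ih =>
    intro c
    have hgrp : ∀ (M : ℕ) (c' : ℕ → ℂ), ∑ j ∈ Finset.range (M + 1), ∑ i ∈ Finset.range (n + 1),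
        qBinom q M j * qBinom q n i * q ^ (j * (n - i)) * c' (i + j)
        = ∑ j ∈ Finset.range (M + 1), qBinom q M j *
            ∑ i ∈ Finset.range (n + 1), qBinom q n i * q ^ (j * (n - i)) * c' (i + j) := by
      intro M c'
      apply Finset.sum_congr rfl
      intro j _
      rw [Finset.mul_sum]
      apply Finset.sum_congr rfl
      intro i _
      ring
    have hsplit := pascal_split hq m (fun j => ∑ i ∈ Finset.range (n + 1),
        qBinom q n i * q ^ (j * (n - i)) * c (i + j))
    have hfirst : ∑ j ∈ Finset.range (m + 1), qBinom q m j *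
        ∑ i ∈ Finset.range (n + 1), qBinom q n i * q ^ (j * (n - i)) * c (i + j)
        = ∑ k ∈ Finset.range (n + m + 1), qBinom q (n + m) k * c k := by
      rw [← hgrp m c]; exact ih c
    have hsecond : ∑ j ∈ Finset.range (m + 1), q ^ (m - j) * qBinom q m j *
        ((fun j => ∑ i ∈ Finset.range (n + 1),
          qBinom q n i * q ^ (j * (n - i)) * c (i + j)) (j+1))
        = ∑ k ∈ Finset.range (n + m + 1),
            q ^ (n + m - k) * qBinom q (n + m) k * c (k + 1) := by
      have hrhs : ∑ k ∈ Finset.range (n + m + 1),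
          q ^ (n + m - k) * qBinom q (n + m) k * c (k + 1)
          = ∑ k ∈ Finset.range (n + m + 1),
            qBinom q (n + m) k * (fun k => q ^ (n + m - k) * c (k + 1)) k := by
        apply Finset.sum_congr rfl
        intro k _
        simp only []
        ring
      rw [hrhs, ← ih (fun k => q ^ (n + m - k) * c (k + 1))]
      apply Finset.sum_congr rfl
      intro j hj
      simp only []
      rw [Finset.mul_sum]
      apply Finset.sum_congr rfl
      intro i hi
      have hi' : i ≤ n := Nat.lt_succ_iff.mp (Finset.mem_range.1 hi)
      have hj' : j ≤ m := Nat.lt_succ_iff.mp (Finset.mem_range.1 hj)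
      have e : (j+1) * (n - i) = j * (n - i) + (n - i) := by ring
      have hid : q ^ (m - j) * q ^ ((j+1) * (n - i))
          = q ^ (j * (n - i)) * q ^ (n + m - (i + j)) := by
        rw [← pow_add, ← pow_add, e]
        congr 1
        omega
      calc q ^ (m - j) * qBinom q m j * (qBinom q n i * q ^ ((j+1) * (n - i)) * c (i + (j+1)))
          = qBinom q m j * qBinom q n i * (q ^ (m - j) * q ^ ((j+1) * (n - i))) * c (i + (j+1)) := by
            ring
        _ = qBinom q m j * qBinom q n i * (q ^ (j * (n - i)) * q ^ (n + m - (i + j))) * c (i + j + 1) := by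
            rw [hid, show i + (j+1) = i + j + 1 from rfl]
        _ = qBinom q m j * qBinom q n i * q ^ (j * (n - i)) * (q ^ (n + m - (i + j)) * c (i + j + 1)) := by
            ring
    calc ∑ j ∈ Finset.range (m + 1 + 1), ∑ i ∈ Finset.range (n + 1),
          qBinom q (m+1) j * qBinom q n i * q ^ (j * (n - i)) * c (i + j)
        = ∑ j ∈ Finset.range (m + 2), qBinom q (m+1) j *
            ∑ i ∈ Finset.range (n + 1), qBinom q n i * q ^ (j * (n - i)) * c (i + j) :=
          hgrp (m+1) c
      _ = ∑ k ∈ Finset.range (n + m + 1), qBinom q (n + m) k * c k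
          + ∑ k ∈ Finset.range (n + m + 1),
              q ^ (n + m - k) * qBinom q (n + m) k * c (k + 1) := by
          rw [hsplit, hfirst, hsecond]
      _ = ∑ k ∈ Finset.range (n + (m + 1) + 1), qBinom q (n + (m+1)) k * c k :=
          (pascal_split hq (n + m) c).symm

end Vandermonde


lemma hRS2_add {q : ℂ} (hq : ‖q‖ < 1) (x y : ℂ) (n m : ℕ) :
    hRS2 q x y (n + m) = ∑ j ∈ Finset.range (m + 1), ∑ i ∈ Finset.range (n + 1),
      qBinom q m j * qBinom q n i * q ^ (j * (n - i))
        * (cauchyP q x y j * cauchyP q x (q ^ j * y) i) := by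
  rw [hRS2, ← vandermonde hq n m (cauchyP q x y)]
  apply Finset.sum_congr rfl
  intro j _
  apply Finset.sum_congr rfl
  intro i _
  rw [show i + j = j + i from Nat.add_comm i j, cauchyP_add]

-- the four building-block sequences for the main rearrangement
noncomputable def Af (q x y t : ℂ) (j i : ℕ) : ℂ :=
  cauchyP q x (q ^ j * y) i * t ^ i / qPoch q q i

noncomputable def Cf (q t : ℂ) (j a : ℕ) : ℂ := (q ^ j * t) ^ a / qPoch q q a

noncomputable def Df (q s : ℂ) (b : ℕ) : ℂ := s ^ b / qPoch q q b

noncomputable def Ef (q x y s : ℂ) (j : ℕ) : ℂ := cauchyP q x y j * s ^ j / qPoch q q j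

noncomputable def wf (q x y t s : ℂ) (n j : ℕ) : ℂ :=
  Ef q x y s j * ∑ i ∈ Finset.range (n + 1), Af q x y t j i * Cf q t j (n - i)

variable {q x y t s : ℂ}

lemma claim1 (hq : ‖q‖ < 1) (x y t s : ℂ) (n m : ℕ) :
    hRS2 q x y (n + m) * t ^ n * s ^ m / (qPoch q q n * qPoch q q m)
      = ∑ j ∈ Finset.range (m + 1), wf q x y t s n j * Df q s (m - j) := by
  have hQ : ∀ n, qPoch q q n ≠ 0 := qPoch_q_ne_zero hq
  rw [hRS2_add hq, Finset.sum_mul, Finset.sum_mul, Finset.sum_div]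
  unfold wf
  apply Finset.sum_congr rfl
  intro j hj
  have hjm : j ≤ m := Nat.lt_succ_iff.mp (Finset.mem_range.1 hj)
  rw [Finset.sum_mul, Finset.sum_mul, Finset.sum_div, Finset.mul_sum, Finset.sum_mul]
  apply Finset.sum_congr rfl
  intro i hi
  have hin : i ≤ n := Nat.lt_succ_iff.mp (Finset.mem_range.1 hi)
  unfold Af Cf Df Ef qBinom
  have ht' : t ^ n = t ^ i * t ^ (n - i) := by rw [← pow_add]; congr 1; omega
  have hs' : s ^ m = s ^ j * s ^ (m - j) := by rw [← pow_add]; congr 1; omega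
  have hqt : (q ^ j * t) ^ (n - i) = q ^ (j * (n - i)) * t ^ (n - i) := by
    rw [mul_pow, ← pow_mul]
  rw [ht', hs', hqt]
  field_simp [hQ n, hQ m, hQ i, hQ j, hQ (n - i), hQ (m - j)]

lemma h1t (ht : ‖t‖ < 1) : ‖1 * t‖ < 1 := by rwa [one_mul]

lemma h1s (hs : ‖s‖ < 1) : ‖1 * s‖ < 1 := by rwa [one_mul]

lemma norm_qjt_le (hq : ‖q‖ < 1) (j : ℕ) : ‖q ^ j * t‖ ≤ ‖t‖ := by
  rw [norm_mul]
  calc ‖q ^ j‖ * ‖t‖ ≤ 1 * ‖t‖ :=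
        mul_le_mul_of_nonneg_right (norm_pow_le_one hq j) (norm_nonneg t)
    _ = ‖t‖ := one_mul _

lemma h1qjt (hq : ‖q‖ < 1) (ht : ‖t‖ < 1) (j : ℕ) : ‖1 * (q ^ j * t)‖ < 1 := by
  rw [one_mul]
  exact lt_of_le_of_lt (norm_qjt_le hq j) ht

lemma summable_norm_Af (hq : ‖q‖ < 1) (hxt : ‖x * t‖ < 1) (j : ℕ) :
    Summable fun i => ‖Af q x y t j i‖ :=
  summable_norm_cauchy hq hxt

lemma summable_norm_Cf (hq : ‖q‖ < 1) (ht : ‖t‖ < 1) (j : ℕ) :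
    Summable fun a => ‖Cf q t j a‖ := by
  apply (summable_norm_cauchy (x := 1) (y := 0) (u := q ^ j * t) hq (h1qjt hq ht j)).congr
  intro a
  rw [Cf, cauchyP_one_zero, one_mul]

lemma summable_norm_Df (hq : ‖q‖ < 1) (hs : ‖s‖ < 1) : Summable fun b => ‖Df q s b‖ := by
  apply (summable_norm_cauchy (x := 1) (y := 0) (u := s) hq (h1s hs)).congr
  intro b
  rw [Df, cauchyP_one_zero, one_mul]

lemma summable_norm_Ef (hq : ‖q‖ < 1) (hxs : ‖x * s‖ < 1) :
    Summable fun j => ‖Ef q x y s j‖ :=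
  summable_norm_cauchy hq hxs

lemma norm_Af_le (hq : ‖q‖ < 1) (j i : ℕ) : ‖Af q x y t j i‖ ≤ pb q x y t i :=
  norm_term_le_pb hq (norm_pow_le_one hq j) (le_refl ‖t‖) i

lemma norm_Cf_le (hq : ‖q‖ < 1) (j a : ℕ) : ‖Cf q t j a‖ ≤ pb q 1 0 t a := by
  have e : Cf q t j a = cauchyP q 1 (q ^ j * 0) a * (q ^ j * t) ^ a / qPoch q q a := by
    rw [mul_zero, cauchyP_one_zero, one_mul, Cf]
  rw [e]
  exact norm_term_le_pb hq (norm_pow_le_one hq j) (norm_qjt_le hq j) a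

lemma norm_Df_le (hq : ‖q‖ < 1) (b : ℕ) : ‖Df q s b‖ ≤ pb q 1 0 s b := by
  have e : Df q s b = cauchyP q 1 (1 * 0) b * s ^ b / qPoch q q b := by
    rw [mul_zero, cauchyP_one_zero, one_mul, Df]
  rw [e]
  exact norm_term_le_pb hq (by simp) (le_refl ‖s‖) b

lemma norm_Ef_le (hq : ‖q‖ < 1) (j : ℕ) : ‖Ef q x y s j‖ ≤ pb q x y s j := by
  have e : Ef q x y s j = cauchyP q x (1 * y) j * s ^ j / qPoch q q j := by
    rw [one_mul, Ef]
  rw [e]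
  exact norm_term_le_pb hq (by simp) (le_refl ‖s‖) j

/-- convolution domination sequences -/
noncomputable def conv1 (q x y t : ℂ) (n : ℕ) : ℝ :=
  ∑ i ∈ Finset.range (n + 1), pb q x y t i * pb q 1 0 t (n - i)

noncomputable def conv2 (q x y s : ℂ) (m : ℕ) : ℝ :=
  ∑ j ∈ Finset.range (m + 1), pb q x y s j * pb q 1 0 s (m - j)

lemma conv1_nonneg (n : ℕ) : 0 ≤ conv1 q x y t n :=
  Finset.sum_nonneg fun i _ => mul_nonneg (pb_nonneg _ _ _ _ _) (pb_nonneg _ _ _ _ _)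

lemma conv2_nonneg (m : ℕ) : 0 ≤ conv2 q x y s m :=
  Finset.sum_nonneg fun j _ => mul_nonneg (pb_nonneg _ _ _ _ _) (pb_nonneg _ _ _ _ _)

lemma summable_conv_aux {f g : ℕ → ℝ} (hf : Summable f) (hg : Summable g) :
    Summable fun n => ∑ i ∈ Finset.range (n + 1), f i * g (n - i) := by
  apply Summable.of_norm
  apply summable_norm_sum_mul_range_of_summable_norm
  · exact hf.abs.congr fun i => (Real.norm_eq_abs (f i)).symm
  · exact hg.abs.congr fun i => (Real.norm_eq_abs (g i)).symm

lemma summable_conv1 (hq : ‖q‖ < 1) (ht : ‖t‖ < 1) (hxt : ‖x * t‖ < 1) :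
    Summable (conv1 q x y t) :=
  summable_conv_aux (summable_pb hq hxt) (summable_pb hq (h1t ht))

lemma summable_conv2 (hq : ‖q‖ < 1) (hs : ‖s‖ < 1) (hxs : ‖x * s‖ < 1) :
    Summable (conv2 q x y s) :=
  summable_conv_aux (summable_pb hq hxs) (summable_pb hq (h1s hs))

lemma norm_wf_le (hq : ‖q‖ < 1) (ht : ‖t‖ < 1) (hxt : ‖x * t‖ < 1) (hs : ‖s‖ < 1)
    (hxs : ‖x * s‖ < 1) (n j : ℕ) :
    ‖wf q x y t s n j‖ ≤ pb q x y s j * conv1 q x y t n := by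
  rw [wf, norm_mul]
  apply mul_le_mul (norm_Ef_le hq j) ?_ (norm_nonneg _) (pb_nonneg _ _ _ _ _)
  calc ‖∑ i ∈ Finset.range (n + 1), Af q x y t j i * Cf q t j (n - i)‖
      ≤ ∑ i ∈ Finset.range (n + 1), ‖Af q x y t j i * Cf q t j (n - i)‖ :=
        norm_sum_le _ _
    _ ≤ ∑ i ∈ Finset.range (n + 1), pb q x y t i * pb q 1 0 t (n - i) := by
        apply Finset.sum_le_sum
        intro i _
        rw [norm_mul]
        exact mul_le_mul (norm_Af_le hq j i) (norm_Cf_le hq j (n - i))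
          (norm_nonneg _) (pb_nonneg _ _ _ _ _)
    _ = conv1 q x y t n := rfl

lemma summable_main (hq : ‖q‖ < 1) (ht : ‖t‖ < 1) (hs : ‖s‖ < 1) (hxt : ‖x * t‖ < 1)
    (hxs : ‖x * s‖ < 1) :
    Summable (fun p : ℕ × ℕ =>
      hRS2 q x y (p.1 + p.2) * t ^ p.1 * s ^ p.2 / (qPoch q q p.1 * qPoch q q p.2)) := by
  apply Summable.of_norm_bounded (g := fun p : ℕ × ℕ => conv1 q x y t p.1 * conv2 q x y s p.2)
    ((summable_conv1 hq ht hxt).mul_of_nonneg (summable_conv2 hq hs hxs)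
      conv1_nonneg conv2_nonneg)
  intro p
  rw [claim1 hq x y t s p.1 p.2]
  calc ‖∑ j ∈ Finset.range (p.2 + 1), wf q x y t s p.1 j * Df q s (p.2 - j)‖
      ≤ ∑ j ∈ Finset.range (p.2 + 1), ‖wf q x y t s p.1 j * Df q s (p.2 - j)‖ :=
        norm_sum_le _ _
    _ ≤ ∑ j ∈ Finset.range (p.2 + 1),
          (pb q x y s j * conv1 q x y t p.1) * pb q 1 0 s (p.2 - j) := by
        apply Finset.sum_le_sum
        intro j _
        rw [norm_mul]
        exact mul_le_mul (norm_wf_le hq ht hxt hs hxs p.1 j) (norm_Df_le hq (p.2 - j))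
          (norm_nonneg _) (mul_nonneg (pb_nonneg _ _ _ _ _) (conv1_nonneg _))
    _ = conv1 q x y t p.1 * conv2 q x y s p.2 := by
        rw [conv2, Finset.mul_sum]
        apply Finset.sum_congr rfl
        intro j _
        ring

lemma summable_rho (hq : ‖q‖ < 1) (ht : ‖t‖ < 1)
    (hys : ∀ j : ℕ, y * s * q ^ j ≠ 1) :
    Summable (fun k : ℕ => qPoch y q k * qPoch (x * s) q k * t ^ k /
      (qPoch q q k * qPoch (y * s) q k)) := by
  apply Summable.of_norm
  have hysn : ∀ n, qPoch (y*s) q n ≠ 0 := qPoch_ne_zero_of_ne_one hys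
  have hQ : ∀ n, qPoch q q n ≠ 0 := qPoch_q_ne_zero hq
  have h1q : ∀ n : ℕ, (1:ℂ) - q * q ^ n ≠ 0 :=
    fun n => one_sub_ne_zero_of_norm (norm_mul_pow_lt_one hq hq n)
  have h1ys : ∀ n : ℕ, (1:ℂ) - (y*s) * q ^ n ≠ 0 := fun n => by
    intro h
    exact hys n (by linear_combination -h)
  apply summable_norm_of_ratio (L := ‖t‖) ht
    (c := fun k => ‖(1 - y * q ^ k) * (1 - (x*s) * q ^ k) * t / ((1 - q * q ^ k) * (1 - (y*s) * q ^ k))‖)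
  · have hnum : Tendsto (fun k : ℕ => (1 - y * q ^ k) * (1 - (x*s) * q ^ k) * t
        / ((1 - q * q ^ k) * (1 - (y*s) * q ^ k))) atTop
        (𝓝 ((1 - y * 0) * (1 - (x*s) * 0) * t / ((1 - q * 0) * (1 - (y*s) * 0)))) := by
      apply Tendsto.div
      · exact ((tendsto_const_nhds.sub ((tendsto_q_pow hq).const_mul y)).mul
          (tendsto_const_nhds.sub ((tendsto_q_pow hq).const_mul (x*s)))).mul_const t
      · exact (tendsto_const_nhds.sub ((tendsto_q_pow hq).const_mul q)).mul
          (tendsto_const_nhds.sub ((tendsto_q_pow hq).const_mul (y*s)))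
      · simp
    have := hnum.norm
    simpa using this
  · intro k
    have hstep : qPoch y q (k+1) * qPoch (x * s) q (k+1) * t ^ (k+1) /
        (qPoch q q (k+1) * qPoch (y * s) q (k+1))
        = (qPoch y q k * qPoch (x * s) q k * t ^ k / (qPoch q q k * qPoch (y * s) q k))
          * ((1 - y * q ^ k) * (1 - (x*s) * q ^ k) * t / ((1 - q * q ^ k) * (1 - (y*s) * q ^ k))) := by
      rw [qPoch_succ y q k, qPoch_succ (x*s) q k, qPoch_succ q q k, qPoch_succ (y*s) q k,
        pow_succ, div_mul_div_comm]
      congr 1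
      · ring
      · ring
    rw [hstep, norm_mul, mul_comm]

lemma main_eq (hq : ‖q‖ < 1) (ht : ‖t‖ < 1) (hs : ‖s‖ < 1) (hxt : ‖x * t‖ < 1)
    (hxs : ‖x * s‖ < 1) (hys : ∀ j : ℕ, y * s * q ^ j ≠ 1) :
    ∑' p : ℕ × ℕ,
      hRS2 q x y (p.1 + p.2) * t ^ p.1 * s ^ p.2 / (qPoch q q p.1 * qPoch q q p.2) =
      qPochInf (y * s) q / (qPochInf s q * qPochInf (x * s) q * qPochInf (x * t) q) *
        ∑' k : ℕ, qPoch y q k * qPoch (x * s) q k * t ^ k /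
          (qPoch q q k * qPoch (y * s) q k) := by
  have hQ : ∀ n, qPoch q q n ≠ 0 := qPoch_q_ne_zero hq
  have hysn : ∀ n, qPoch (y * s) q n ≠ 0 := qPoch_ne_zero_of_ne_one hys
  have hsumL := summable_main (x := x) (y := y) hq ht hs hxt hxs
  -- Step 1: the left-hand side in product form
  have e1 : ∀ n : ℕ, ∑' m, hRS2 q x y (n + m) * t ^ n * s ^ m / (qPoch q q n * qPoch q q m)
      = (∑' j, wf q x y t s n j) * ∑' b, Df q s b := by
    intro n
    have hwn : Summable fun j => ‖wf q x y t s n j‖ :=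
      Summable.of_nonneg_of_le (fun _ => norm_nonneg _) (fun j => norm_wf_le hq ht hxt hs hxs n j)
        ((summable_pb hq hxs).mul_right _)
    rw [tsum_mul_tsum_eq_tsum_sum_range_of_summable_norm hwn (summable_norm_Df hq hs)]
    exact tsum_congr fun m => claim1 hq x y t s n m
  have hw_uncurry : Summable (Function.uncurry (wf q x y t s)) := by
    apply Summable.of_norm_bounded (g := fun p : ℕ × ℕ => conv1 q x y t p.1 * pb q x y s p.2)
      ((summable_conv1 hq ht hxt).mul_of_nonneg (summable_pb hq hxs)
        (fun n => conv1_nonneg n) (fun j => pb_nonneg _ _ _ _ j))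
    intro p
    calc ‖wf q x y t s p.1 p.2‖ ≤ pb q x y s p.2 * conv1 q x y t p.1 :=
          norm_wf_le hq ht hxt hs hxs p.1 p.2
      _ = conv1 q x y t p.1 * pb q x y s p.2 := mul_comm _ _
  have e2 : ∀ j : ℕ, ∑' n, wf q x y t s n j
      = Ef q x y s j * (cS q x (q ^ j * y) t * cS q 1 0 (q ^ j * t)) := by
    intro j
    have hAC : ∑' n, ∑ i ∈ Finset.range (n + 1), Af q x y t j i * Cf q t j (n - i)
        = (∑' i, Af q x y t j i) * ∑' a, Cf q t j a :=
      (tsum_mul_tsum_eq_tsum_sum_range_of_summable_norm (summable_norm_Af hq hxt j)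
        (summable_norm_Cf hq ht j)).symm
    have hAs : (∑' i, Af q x y t j i) = cS q x (q ^ j * y) t := rfl
    have hCs : (∑' a, Cf q t j a) = cS q 1 0 (q ^ j * t) :=
      show _ = ∑' a, cauchyP q 1 0 a * (q ^ j * t) ^ a / qPoch q q a from
        tsum_congr fun a => by rw [Cf, cauchyP_one_zero, one_mul]
    calc ∑' n, wf q x y t s n j
        = ∑' n, Ef q x y s j * ∑ i ∈ Finset.range (n + 1), Af q x y t j i * Cf q t j (n - i) :=
          tsum_congr fun n => rfl
      _ = Ef q x y s j * ∑' n, ∑ i ∈ Finset.range (n + 1), Af q x y t j i * Cf q t j (n - i) :=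
          tsum_mul_left
      _ = Ef q x y s j * (cS q x (q ^ j * y) t * cS q 1 0 (q ^ j * t)) := by
          rw [hAC, hAs, hCs]
  have hDsum : (∑' b, Df q s b) = cS q 1 0 s :=
    show _ = ∑' b, cauchyP q 1 0 b * s ^ b / qPoch q q b from
      tsum_congr fun b => by rw [Df, cauchyP_one_zero, one_mul]
  have hL : (∑' p : ℕ × ℕ,
        hRS2 q x y (p.1 + p.2) * t ^ p.1 * s ^ p.2 / (qPoch q q p.1 * qPoch q q p.2))
      = (∑' j, Ef q x y s j * (cS q x (q ^ j * y) t * cS q 1 0 (q ^ j * t))) * cS q 1 0 s := by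
    calc (∑' p : ℕ × ℕ,
          hRS2 q x y (p.1 + p.2) * t ^ p.1 * s ^ p.2 / (qPoch q q p.1 * qPoch q q p.2))
        = ∑' n, ∑' m, hRS2 q x y (n + m) * t ^ n * s ^ m / (qPoch q q n * qPoch q q m) :=
          hsumL.tsum_prod
      _ = ∑' n, (∑' j, wf q x y t s n j) * ∑' b, Df q s b := tsum_congr fun n => e1 n
      _ = (∑' n, ∑' j, wf q x y t s n j) * ∑' b, Df q s b := tsum_mul_right
      _ = (∑' j, ∑' n, wf q x y t s n j) * ∑' b, Df q s b := by rw [← hw_uncurry.tsum_comm]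
      _ = (∑' j, Ef q x y s j * (cS q x (q ^ j * y) t * cS q 1 0 (q ^ j * t))) * cS q 1 0 s := by
          rw [tsum_congr e2, hDsum]
  -- Step 2: multiply by (xt;q)_inf
  have hkey : ∀ j : ℕ, qPochInf (x * t) q * (cS q x (q ^ j * y) t * cS q 1 0 (q ^ j * t))
      = cS q 1 y (q ^ j * t) := by
    intro j
    have k1 := cS_mul (x := x) (y := q ^ j * y) (u := t) hq hxt
    have k2 := cS_mul (x := 1) (y := 0) (u := q ^ j * t) hq (h1qjt hq ht j)
    rw [one_mul, zero_mul, qPochInf_zero] at k2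
    have k3 := cS_mul (x := 1) (y := y) (u := q ^ j * t) hq (h1qjt hq ht j)
    rw [one_mul] at k3
    have k4 : q ^ j * y * t = y * (q ^ j * t) := by ring
    rw [k4] at k1
    calc qPochInf (x * t) q * (cS q x (q ^ j * y) t * cS q 1 0 (q ^ j * t))
        = (cS q x (q ^ j * y) t * qPochInf (x * t) q) * cS q 1 0 (q ^ j * t) := by ring
      _ = qPochInf (y * (q ^ j * t)) q * cS q 1 0 (q ^ j * t) := by rw [k1]
      _ = (cS q 1 y (q ^ j * t) * qPochInf (q ^ j * t) q) * cS q 1 0 (q ^ j * t) := by rw [k3]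
      _ = cS q 1 y (q ^ j * t) * (cS q 1 0 (q ^ j * t) * qPochInf (q ^ j * t) q) := by ring
      _ = cS q 1 y (q ^ j * t) := by rw [k2, mul_one]
  have hWW : ∀ j : ℕ, cS q 1 y (q ^ j * t) = ∑' k, qPoch y q k * (q ^ j * t) ^ k / qPoch q q k := by
    intro j
    exact tsum_congr fun k => by rw [cauchyP_one]
  -- Step 3: swap the double sum
  have homega : Summable (fun p : ℕ × ℕ =>
      Ef q x y s p.1 * (qPoch y q p.2 * (q ^ p.1 * t) ^ p.2 / qPoch q q p.2)) := by
    apply Summable.of_norm_bounded (g := fun p : ℕ × ℕ => pb q x y s p.1 * pb q 1 y t p.2)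
      ((summable_pb hq hxs).mul_of_nonneg (summable_pb hq (h1t ht))
        (fun j => pb_nonneg _ _ _ _ j) (fun k => pb_nonneg _ _ _ _ k))
    intro p
    rw [norm_mul]
    apply mul_le_mul (norm_Ef_le hq p.1) ?_ (norm_nonneg _) (pb_nonneg _ _ _ _ _)
    have e : qPoch y q p.2 * (q ^ p.1 * t) ^ p.2 / qPoch q q p.2
        = cauchyP q 1 (1 * y) p.2 * (q ^ p.1 * t) ^ p.2 / qPoch q q p.2 := by
      rw [one_mul, cauchyP_one]
    rw [e]
    exact norm_term_le_pb hq (by simp) (norm_qjt_le hq p.1) p.2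
  have hterm : ∀ (j k : ℕ), Ef q x y s j * (qPoch y q k * (q ^ j * t) ^ k / qPoch q q k)
      = (qPoch y q k * t ^ k / qPoch q q k) * (cauchyP q x y j * (s * q ^ k) ^ j / qPoch q q j) := by
    intro j k
    rw [Ef, mul_pow, mul_pow, ← pow_mul, ← pow_mul, Nat.mul_comm k j]
    ring
  have hswap : ∑' j, Ef q x y s j * cS q 1 y (q ^ j * t)
      = ∑' k, (qPoch y q k * t ^ k / qPoch q q k) * cS q x y (s * q ^ k) := by
    calc ∑' j, Ef q x y s j * cS q 1 y (q ^ j * t)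
        = ∑' j, ∑' k, Ef q x y s j * (qPoch y q k * (q ^ j * t) ^ k / qPoch q q k) := by
          apply tsum_congr
          intro j
          rw [hWW j, tsum_mul_left]
      _ = ∑' k, ∑' j, Ef q x y s j * (qPoch y q k * (q ^ j * t) ^ k / qPoch q q k) :=
          (Summable.tsum_comm (f := fun j k => Ef q x y s j
            * (qPoch y q k * (q ^ j * t) ^ k / qPoch q q k)) (by exact homega)).symm
      _ = ∑' k, (qPoch y q k * t ^ k / qPoch q q k) * cS q x y (s * q ^ k) := by
          apply tsum_congr
          intro k
          rw [show cS q x y (s * q ^ k)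
            = ∑' j, cauchyP q x y j * (s * q ^ k) ^ j / qPoch q q j from rfl, ← tsum_mul_left]
          exact tsum_congr fun j => hterm j k
  -- Step 4: final algebraic assembly
  have hDs := cS_mul (x := 1) (y := 0) (u := s) hq (h1s hs)
  rw [one_mul, zero_mul, qPochInf_zero] at hDs
  have hZZ : ∀ k : ℕ, cS q x y (s * q ^ k) * qPochInf (x * (s * q ^ k)) q
      = qPochInf (y * (s * q ^ k)) q := by
    intro k
    apply cS_mul hq
    rw [show x * (s * q ^ k) = (x * s) * q ^ k by ring]
    exact norm_mul_pow_lt_one hq hxs k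
  have hPxtL : qPochInf (x * t) q * (∑' p : ℕ × ℕ,
        hRS2 q x y (p.1 + p.2) * t ^ p.1 * s ^ p.2 / (qPoch q q p.1 * qPoch q q p.2))
      = (∑' k, (qPoch y q k * t ^ k / qPoch q q k) * cS q x y (s * q ^ k)) * cS q 1 0 s := by
    rw [hL, ← hswap]
    calc qPochInf (x * t) q
          * ((∑' j, Ef q x y s j * (cS q x (q ^ j * y) t * cS q 1 0 (q ^ j * t))) * cS q 1 0 s)
        = (∑' j, qPochInf (x * t) q
            * (Ef q x y s j * (cS q x (q ^ j * y) t * cS q 1 0 (q ^ j * t)))) * cS q 1 0 s := by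
          rw [tsum_mul_left]
          ring
      _ = (∑' j, Ef q x y s j * cS q 1 y (q ^ j * t)) * cS q 1 0 s := by
          congr 1
          apply tsum_congr
          intro j
          rw [show qPochInf (x * t) q
              * (Ef q x y s j * (cS q x (q ^ j * y) t * cS q 1 0 (q ^ j * t)))
              = Ef q x y s j * (qPochInf (x * t) q
                * (cS q x (q ^ j * y) t * cS q 1 0 (q ^ j * t))) from by ring, hkey j]
  have hmain : qPochInf s q * (qPochInf (x * s) q * (qPochInf (x * t) q
        * ∑' p : ℕ × ℕ,
          hRS2 q x y (p.1 + p.2) * t ^ p.1 * s ^ p.2 / (qPoch q q p.1 * qPoch q q p.2)))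
      = qPochInf (y * s) q * ∑' k : ℕ, qPoch y q k * qPoch (x * s) q k * t ^ k /
          (qPoch q q k * qPoch (y * s) q k) := by
    rw [hPxtL]
    have lhs_eq : qPochInf s q * (qPochInf (x * s) q
          * ((∑' k, (qPoch y q k * t ^ k / qPoch q q k) * cS q x y (s * q ^ k)) * cS q 1 0 s))
        = ∑' k, qPochInf (x * s) q
            * ((qPoch y q k * t ^ k / qPoch q q k) * cS q x y (s * q ^ k)) := by
      rw [tsum_mul_left (a := qPochInf (x * s) q)]
      calc qPochInf s q * (qPochInf (x * s) q
            * ((∑' k, (qPoch y q k * t ^ k / qPoch q q k) * cS q x y (s * q ^ k)) * cS q 1 0 s))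
          = (cS q 1 0 s * qPochInf s q) * (qPochInf (x * s) q
              * ∑' k, (qPoch y q k * t ^ k / qPoch q q k) * cS q x y (s * q ^ k)) := by ring
        _ = qPochInf (x * s) q
              * ∑' k, (qPoch y q k * t ^ k / qPoch q q k) * cS q x y (s * q ^ k) := by
            rw [hDs, one_mul]
    rw [lhs_eq, ← tsum_mul_left]
    apply tsum_congr
    intro k
    rw [qPochInf_split hq (x * s) k, qPochInf_split hq (y * s) k,
      show (x * s) * q ^ k = x * (s * q ^ k) by ring,
      show (y * s) * q ^ k = y * (s * q ^ k) by ring, ← hZZ k]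
    have hsy : qPoch (s * y) q k ≠ 0 := by rw [mul_comm]; exact hysn k
    field_simp [hQ k, hysn k, hsy]
  have hPs : qPochInf s q ≠ 0 := qPochInf_ne_zero_of_norm hq hs
  have hPxs : qPochInf (x * s) q ≠ 0 := qPochInf_ne_zero_of_norm hq hxs
  have hPxt : qPochInf (x * t) q ≠ 0 := qPochInf_ne_zero_of_norm hq hxt
  rw [div_mul_eq_mul_div, eq_div_iff (mul_ne_zero (mul_ne_zero hPs hPxs) hPxt)]
  linear_combination hmain

end RogersAux

/-- The Rogers formula for the bivariate Rogers–Szegő polynomials. -/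
theorem rogers_formula_bivariate (q x y t s : ℂ)
    (hq : ‖q‖ < 1) (ht : ‖t‖ < 1) (hs : ‖s‖ < 1) (hxt : ‖x * t‖ < 1) (hxs : ‖x * s‖ < 1)
    (hys : ∀ j : ℕ, y * s * q ^ j ≠ 1) :
    Summable (fun p : ℕ × ℕ =>
      hRS2 q x y (p.1 + p.2) * t ^ p.1 * s ^ p.2 / (qPoch q q p.1 * qPoch q q p.2)) ∧
    Summable (fun k : ℕ => qPoch y q k * qPoch (x * s) q k * t ^ k /
      (qPoch q q k * qPoch (y * s) q k)) ∧
    ∑' p : ℕ × ℕ,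
      hRS2 q x y (p.1 + p.2) * t ^ p.1 * s ^ p.2 / (qPoch q q p.1 * qPoch q q p.2) =
      qPochInf (y * s) q / (qPochInf s q * qPochInf (x * s) q * qPochInf (x * t) q) *
        ∑' k : ℕ, qPoch y q k * qPoch (x * s) q k * t ^ k /
          (qPoch q q k * qPoch (y * s) q k) := by
  exact ⟨RogersAux.summable_main hq ht hs hxt hxs, RogersAux.summable_rho hq ht hys,
    RogersAux.main_eq hq ht hs hxt hxs hys⟩
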